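/- arXiv:2201.01967 — 2 statements merged into one kernel-verified Lean document; each statement's English description precedes it below -/
import Mathlib

section
/- Let p : 𝒳 ⥤ 𝒮 be a functor and let φ : U ⟶ X, ψ : V ⟶ Y, a : X ⟶ Y, b : U ⟶ V be morphisms of 𝒳 with φ ≫ a = b ≫ ψ, where φ and ψ are strongly cartesian. If the image square p.map φ ≫ p.map a = p.map b ≫ p.map ψ is a pullback square in 𝒮, then the square φ ≫ a = b ≫ ψ is a pullback square in 𝒳. -/
open CategoryTheory CategoryTheory.Functor CategoryTheory.Limits

/-- A commutative square in `𝒳` with strongly cartesian horizontal sides lying over a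
pullback square in `𝒮` is itself a pullback square in `𝒳`. -/
theorem special_square_isPullback {𝒮 : Type*} {𝒳 : Type*} [Category 𝒮] [Category 𝒳]
    (p : 𝒳 ⥤ 𝒮) {U X V Y : 𝒳} (φ : U ⟶ X) (ψ : V ⟶ Y) (a : X ⟶ Y) (b : U ⟶ V)
    [p.IsStronglyCartesian (p.map φ) φ] [p.IsStronglyCartesian (p.map ψ) ψ]
    (hcomm : φ ≫ a = b ≫ ψ)
    (hpb : IsPullback (p.map φ) (p.map b) (p.map a) (p.map ψ)) :
    IsPullback φ b a ψ := by
  have hcond' : ∀ s : PullbackCone a ψ, p.map s.fst ≫ p.map a = p.map s.snd ≫ p.map ψ := by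
    intro s
    rw [← p.map_comp, ← p.map_comp, s.condition]
  refine ⟨⟨hcomm⟩, ⟨PullbackCone.IsLimit.mk _
    (fun s => IsStronglyCartesian.map p (p.map φ) φ
      (g := hpb.lift (p.map s.fst) (p.map s.snd) (hcond' s))
      (by rw [IsPullback.lift_fst]) s.fst) ?_ ?_ ?_⟩⟩
  · intro s
    exact IsStronglyCartesian.fac p (p.map φ) φ _ s.fst
  · intro s
    set h := hpb.lift (p.map s.fst) (p.map s.snd) (hcond' s)
    haveI : p.IsHomLift (h ≫ p.map b) s.snd := by
      rw [IsPullback.lift_snd]; infer_instance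
    apply IsStronglyCartesian.ext p (p.map ψ) ψ (h ≫ p.map b)
    rw [Category.assoc, ← hcomm, ← Category.assoc, IsStronglyCartesian.fac, s.condition]
  · intro s m hm₁ hm₂
    have hmap : p.map m = hpb.lift (p.map s.fst) (p.map s.snd) (hcond' s) := by
      apply hpb.hom_ext
      · rw [IsPullback.lift_fst, ← p.map_comp, hm₁]
      · rw [IsPullback.lift_snd, ← p.map_comp, hm₂]
    haveI : p.IsHomLift (hpb.lift (p.map s.fst) (p.map s.snd) (hcond' s)) m :=
      hmap ▸ inferInstance
    exact IsStronglyCartesian.map_uniq p (p.map φ) φ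
      (g := hpb.lift (p.map s.fst) (p.map s.snd) (hcond' s))
      (by rw [IsPullback.lift_fst]) s.fst m hm₁
end

section
/- Let p : 𝒳 ⥤ 𝒮 be a fibered category over a base category 𝒮 with pullbacks. For every morphism a : X ⟶ Y of 𝒳 and every morphism f : L ⟶ p.obj Y of 𝒮, form the pullback of p.map a along f, with projections f' : K ⟶ p.obj X (top) and g : K ⟶ L (left). Then there exist objects U, V of 𝒳, a strongly cartesian morphism ψ : V ⟶ Y lifting f, a strongly cartesian morphism φ : U ⟶ X lifting f', and a morphism b : U ⟶ V lifting g, such that φ ≫ a = b ≫ ψ and this square is a pullback square in 𝒳. (Existence of the contravariant reindexing f*a of a morphism a along a base morphism f.) -/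
open CategoryTheory CategoryTheory.Functor CategoryTheory.Limits

/-- Existence of the contravariant reindexing `f*a` of a morphism `a` of a fibered
category along a base morphism `f`: the pullback of `p.map a` along `f` lifts to a
"special" square in `𝒳`, which is moreover a pullback square in `𝒳`. -/
theorem exists_reindexing {𝒮 : Type*} {𝒳 : Type*} [Category 𝒮] [Category 𝒳]
    [HasPullbacks 𝒮] (p : 𝒳 ⥤ 𝒮) [p.IsFibered]
    {X Y : 𝒳} (a : X ⟶ Y) {L : 𝒮} (f : L ⟶ p.obj Y) :
    ∃ (U V : 𝒳) (ψ : V ⟶ Y) (φ : U ⟶ X) (b : U ⟶ V),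
      p.IsStronglyCartesian f ψ ∧
      p.IsStronglyCartesian (pullback.fst (p.map a) f) φ ∧
      p.IsHomLift (pullback.snd (p.map a) f) b ∧
      φ ≫ a = b ≫ ψ ∧ IsPullback φ b a ψ := by
  obtain ⟨V, ψ, hψ⟩ := Functor.IsPreFibered.exists_isCartesian' (p := p) f
  obtain ⟨U, φ, hφ⟩ :=
    Functor.IsPreFibered.exists_isCartesian' (p := p) (pullback.fst (p.map a) f)
  haveI := hψ; haveI := hφ
  haveI hψs : p.IsStronglyCartesian f ψ := inferInstance
  haveI hφs : p.IsStronglyCartesian (pullback.fst (p.map a) f) φ := inferInstance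
  let b : U ⟶ V := Functor.IsStronglyCartesian.map p f ψ
    (g := pullback.snd (p.map a) f) pullback.condition (φ ≫ a)
  haveI hb : p.IsHomLift (pullback.snd (p.map a) f) b :=
    Functor.IsStronglyCartesian.map_isHomLift p f ψ pullback.condition (φ ≫ a)
  have hfac : b ≫ ψ = φ ≫ a :=
    Functor.IsStronglyCartesian.fac p f ψ pullback.condition (φ ≫ a)
  have hV : p.obj V = L := IsHomLift.domain_eq p f ψ
  have hU : p.obj U = pullback (p.map a) f :=
    IsHomLift.domain_eq p (pullback.fst (p.map a) f) φ
  have hψmap : p.map ψ = eqToHom hV ≫ f ≫ eqToHom (IsHomLift.codomain_eq p f ψ).symm :=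
    IsHomLift.fac' p f ψ
  have hφmap : p.map φ = eqToHom hU ≫ pullback.fst (p.map a) f ≫
      eqToHom (IsHomLift.codomain_eq p (pullback.fst (p.map a) f) φ).symm :=
    IsHomLift.fac' p (pullback.fst (p.map a) f) φ
  have hbmap : p.map b = eqToHom hU ≫ pullback.snd (p.map a) f ≫ eqToHom hV.symm :=
    IsHomLift.fac' p (pullback.snd (p.map a) f) b
  refine ⟨U, V, ψ, φ, b, hψs, hφs, hb, hfac.symm, ?_⟩
  have key : ∀ s : PullbackCone a ψ, ∃ l : s.pt ⟶ U, (l ≫ φ = s.fst ∧ l ≫ b = s.snd) ∧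
      ∀ m : s.pt ⟶ U, m ≫ φ = s.fst → m ≫ b = s.snd → m = l := by
    intro s
    have hcond : p.map s.fst ≫ p.map a = (p.map s.snd ≫ eqToHom hV) ≫ f := by
      have := congrArg p.map s.condition
      simp only [Functor.map_comp, hψmap] at this ⊢
      simpa using this
    set g : p.obj s.pt ⟶ pullback (p.map a) f := pullback.lift _ _ hcond with hg
    haveI : p.IsHomLift g (Functor.IsStronglyCartesian.map p (pullback.fst (p.map a) f) φ
      (pullback.lift_fst _ _ hcond).symm s.fst) :=
      Functor.IsStronglyCartesian.map_isHomLift p _ φ _ _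
    set l : s.pt ⟶ U := Functor.IsStronglyCartesian.map p (pullback.fst (p.map a) f) φ
      (pullback.lift_fst _ _ hcond).symm s.fst with hl
    have hlφ : l ≫ φ = s.fst :=
      Functor.IsStronglyCartesian.fac p (pullback.fst (p.map a) f) φ _ s.fst
    have hlb : l ≫ b = s.snd := by
      haveI : p.IsHomLift (g ≫ pullback.snd (p.map a) f) (l ≫ b) := inferInstance
      haveI : p.IsHomLift (g ≫ pullback.snd (p.map a) f) s.snd := by
        rw [hg, pullback.lift_snd]
        infer_instance
      refine Functor.IsStronglyCartesian.ext p f ψ (g ≫ pullback.snd (p.map a) f) ?_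
      rw [Category.assoc, hfac, ← Category.assoc, hlφ, s.condition]
    refine ⟨l, ⟨hlφ, hlb⟩, fun m h₁ h₂ => ?_⟩
    have hm : p.map m ≫ eqToHom hU = g := by
      apply pullback.hom_ext
      · rw [hg, pullback.lift_fst, Category.assoc]
        have := congrArg p.map h₁
        rw [Functor.map_comp, hφmap] at this
        simpa using this
      · rw [hg, pullback.lift_snd, Category.assoc]
        have := congrArg p.map h₂
        rw [Functor.map_comp, hbmap] at this
        rw [← Category.assoc] at this ⊢
        rw [← this]
        simp
    haveI : p.IsHomLift g m := by
      rw [← hm]; infer_instance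
    refine Functor.IsStronglyCartesian.ext p (pullback.fst (p.map a) f) φ g ?_
    rw [hlφ, h₁]
  exact IsPullback.of_isLimit (PullbackCone.IsLimit.mk hfac.symm
    (fun s => (key s).choose) (fun s => (key s).choose_spec.1.1)
    (fun s => (key s).choose_spec.1.2)
    (fun s m h₁ h₂ => (key s).choose_spec.2 m h₁ h₂))
end
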